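/- arXiv:1702.07697 — 2 statements merged into one kernel-verified Lean document; each statement's English description precedes it below -/
import Mathlib

section
/- Let f_0 be a Littlewood polynomial (all coefficients in {-1,1}) of length ℓ, and define f_{n+1}(z) = f_n(z) + z^{len f_n} f_n†(-z). Then for all n, ‖f_n‖_4^4/‖f_n‖_2^4 = (2/3)·(‖f_0‖_4^4 + ‖f_0 f_0~‖_2^2)/‖f_0‖_2^4 + (-1/2)^n·(1/3)·(‖f_0‖_4^4 - 2‖f_0 f_0~‖_2^2)/‖f_0‖_2^4. -/
noncomputable def dagger (f : Polynomial ℂ) : Polynomial ℂ :=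
  ∑ j ∈ Finset.range (f.natDegree + 1),
    Polynomial.C ((starRingEnd ℂ) (f.coeff (f.natDegree - j))) * Polynomial.X ^ j

noncomputable def circ (θ : ℝ) : ℂ := Complex.exp (θ * Complex.I)

noncomputable def n2 (f : Polynomial ℂ) : ℝ :=
  (1 / (2 * Real.pi)) * ∫ θ in (0:ℝ)..(2 * Real.pi), ‖f.eval (circ θ)‖ ^ 2

noncomputable def n4 (f : Polynomial ℂ) : ℝ :=
  (1 / (2 * Real.pi)) * ∫ θ in (0:ℝ)..(2 * Real.pi), ‖f.eval (circ θ)‖ ^ 4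

noncomputable def vprod (f : Polynomial ℂ) : ℝ :=
  (1 / (2 * Real.pi)) * ∫ θ in (0:ℝ)..(2 * Real.pi), ‖f.eval (circ θ) * f.eval (-(circ θ))‖ ^ 2



open Polynomial Complex Finset intervalIntegral

@[continuity, fun_prop]
lemma continuous_circ : Continuous circ := by
  unfold circ
  exact Complex.continuous_exp.comp (by continuity)

lemma circ_kernel (j k : ℕ) :
    (∫ θ in (0:ℝ)..(2*Real.pi), circ θ ^ j * (starRingEnd ℂ) (circ θ ^ k))
      = if j = k then (2*Real.pi : ℂ) else 0 := by
  have hint : ∀ θ : ℝ, circ θ ^ j * (starRingEnd ℂ) (circ θ ^ k)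
      = Complex.exp ((((j:ℂ) - k) * Complex.I) * θ) := by
    intro θ
    unfold circ
    rw [← Complex.exp_nat_mul, ← Complex.exp_nat_mul, ← Complex.exp_conj, ← Complex.exp_add]
    congr 1
    simp only [map_mul, Complex.conj_I, Complex.conj_ofReal, map_natCast]
    ring
  rw [intervalIntegral.integral_congr (fun θ _ => hint θ)]
  by_cases hjk : j = k
  · subst hjk
    simp
  · have hc : ((j:ℂ) - k) * Complex.I ≠ 0 := by
      apply mul_ne_zero _ Complex.I_ne_zero
      rw [sub_ne_zero]
      exact_mod_cast fun h => hjk (Nat.cast_injective h)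
    rw [if_neg hjk, integral_exp_mul_complex hc]
    have h1 : Complex.exp (((j:ℂ) - k) * Complex.I * (2*Real.pi)) = 1 := by
      have := Complex.exp_int_mul_two_pi_mul_I ((j:ℤ) - k)
      rw [← this]
      congr 1
      push_cast
      ring
    simp [h1]

set_option maxHeartbeats 1000000 in
lemma parseval (p : Polynomial ℂ) {N : ℕ} (hN : p.natDegree < N) :
    (1 / (2 * Real.pi)) * ∫ θ in (0:ℝ)..(2 * Real.pi), ‖p.eval (circ θ)‖ ^ 2
      = ∑ j ∈ Finset.range N, ‖p.coeff j‖ ^ 2 := by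
  have h2π : (2 * Real.pi) ≠ 0 := by positivity
  have e1 : ∀ θ : ℝ, ((‖p.eval (circ θ)‖^2 : ℝ) : ℂ)
      = ∑ j ∈ Finset.range N, ∑ k ∈ Finset.range N,
          (p.coeff j * (starRingEnd ℂ) (p.coeff k)) * (circ θ ^ j * (starRingEnd ℂ) (circ θ ^ k)) := by
    intro θ
    have h0 : ((‖p.eval (circ θ)‖^2 : ℝ) : ℂ)
        = p.eval (circ θ) * (starRingEnd ℂ) (p.eval (circ θ)) := by
      rw [Complex.mul_conj, Complex.sq_norm]
    rw [h0, Polynomial.eval_eq_sum_range' hN (circ θ), map_sum, Finset.sum_mul_sum]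
    refine Finset.sum_congr rfl fun j _ => Finset.sum_congr rfl fun k _ => ?_
    rw [map_mul, map_pow]
    ring
  have hcont : ∀ (c : ℂ) (j k : ℕ), IntervalIntegrable
      (fun θ : ℝ => c * (circ θ ^ j * (starRingEnd ℂ) (circ θ ^ k))) MeasureTheory.volume 0 (2*Real.pi) := by
    intro c j k
    apply Continuous.intervalIntegrable
    exact continuous_const.mul ((continuous_circ.pow j).mul
      (Complex.continuous_conj.comp (continuous_circ.pow k)))
  have key : (∫ θ in (0:ℝ)..(2*Real.pi), ((‖p.eval (circ θ)‖^2 : ℝ) : ℂ))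
      = (2*Real.pi) * ∑ j ∈ Finset.range N, ((‖p.coeff j‖^2 : ℝ) : ℂ) := by
    rw [intervalIntegral.integral_congr (fun θ _ => e1 θ)]
    have hint2 : ∀ j ∈ Finset.range N, IntervalIntegrable (fun θ : ℝ => ∑ k ∈ Finset.range N,
        (p.coeff j * (starRingEnd ℂ) (p.coeff k)) * (circ θ ^ j * (starRingEnd ℂ) (circ θ ^ k)))
        MeasureTheory.volume 0 (2*Real.pi) :=
      fun j _ => by
        apply Continuous.intervalIntegrable
        exact continuous_finset_sum _ fun k _ => continuous_const.mul
          ((continuous_circ.pow j).mul (Complex.continuous_conj.comp (continuous_circ.pow k)))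
    rw [intervalIntegral.integral_finset_sum (f := fun j θ => ∑ k ∈ Finset.range N,
        (p.coeff j * (starRingEnd ℂ) (p.coeff k)) * (circ θ ^ j * (starRingEnd ℂ) (circ θ ^ k))) hint2]
    have : ∀ j ∈ Finset.range N, (∫ θ in (0:ℝ)..(2*Real.pi), ∑ k ∈ Finset.range N,
        (p.coeff j * (starRingEnd ℂ) (p.coeff k)) * (circ θ ^ j * (starRingEnd ℂ) (circ θ ^ k)))
        = (2*Real.pi) * ((‖p.coeff j‖^2 : ℝ) : ℂ) := by
      intro j hj
      rw [intervalIntegral.integral_finset_sum (f := fun k θ =>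
        (p.coeff j * (starRingEnd ℂ) (p.coeff k)) * (circ θ ^ j * (starRingEnd ℂ) (circ θ ^ k)))
        (fun k _ => hcont _ j k)]
      have : ∀ k ∈ Finset.range N, (∫ θ in (0:ℝ)..(2*Real.pi),
          (p.coeff j * (starRingEnd ℂ) (p.coeff k)) * (circ θ ^ j * (starRingEnd ℂ) (circ θ ^ k)))
          = (p.coeff j * (starRingEnd ℂ) (p.coeff k)) * (if j = k then (2*Real.pi : ℂ) else 0) := by
        intro k _
        rw [intervalIntegral.integral_const_mul, circ_kernel]
      rw [Finset.sum_congr rfl this, Finset.sum_eq_single_of_mem j hj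
        (fun k _ hk => by rw [if_neg (Ne.symm hk), mul_zero])]
      rw [if_pos rfl, Complex.mul_conj, Complex.sq_norm]
      ring
    rw [Finset.sum_congr rfl this, ← Finset.mul_sum]
  -- pass to real
  have keyR : (∫ θ in (0:ℝ)..(2*Real.pi), ‖p.eval (circ θ)‖^2)
      = (2*Real.pi) * ∑ j ∈ Finset.range N, ‖p.coeff j‖^2 := by
    have := key
    rw [intervalIntegral.integral_ofReal] at this
    exact_mod_cast this
  rw [keyR]
  field_simp

namespace BMaux
open Polynomial

noncomputable def Phi (N : ℕ) (p q : Polynomial ℂ) : ℂ :=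
  ∑ j ∈ Finset.range (N+1), p.coeff j * q.coeff j

lemma Phi_comm (N : ℕ) (p q : Polynomial ℂ) : Phi N p q = Phi N q p := by
  unfold Phi; exact Finset.sum_congr rfl fun j _ => mul_comm _ _

lemma Phi_add_left (N : ℕ) (p q s : Polynomial ℂ) :
    Phi N (p + q) s = Phi N p s + Phi N q s := by
  unfold Phi; rw [← Finset.sum_add_distrib]
  exact Finset.sum_congr rfl fun j _ => by rw [coeff_add, add_mul]

lemma Phi_add_right (N : ℕ) (p q s : Polynomial ℂ) :
    Phi N s (p + q) = Phi N s p + Phi N s q := by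
  rw [Phi_comm, Phi_add_left, Phi_comm N p, Phi_comm N q]

lemma Phi_C_mul_left (N : ℕ) (c : ℂ) (p s : Polynomial ℂ) :
    Phi N (C c * p) s = c * Phi N p s := by
  unfold Phi; rw [Finset.mul_sum]
  exact Finset.sum_congr rfl fun j _ => by rw [coeff_C_mul, mul_assoc]

lemma Phi_C_mul_right (N : ℕ) (c : ℂ) (p s : Polynomial ℂ) :
    Phi N s (C c * p) = c * Phi N s p := by
  rw [Phi_comm, Phi_C_mul_left, Phi_comm]

lemma Phi_eq_coeff (N : ℕ) (p q : Polynomial ℂ) :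
    Phi N p q = (p * reflect N q).coeff N := by
  rw [coeff_mul, Finset.Nat.sum_antidiagonal_eq_sum_range_succ_mk]
  refine Finset.sum_congr rfl fun j hj => ?_
  rw [coeff_reflect]
  congr 2
  rw [revAt_le (Nat.sub_le _ _)]
  simp only [Finset.mem_range] at hj
  omega

lemma Phi_mono {M N : ℕ} (h : M ≤ N) {p : Polynomial ℂ} (hp : p.natDegree ≤ M)
    (q : Polynomial ℂ) : Phi N p q = Phi M p q := by
  unfold Phi
  rw [← Finset.sum_subset (Finset.range_subset_range.mpr (by omega : M+1 ≤ N+1))]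
  intro j _ hj
  rw [coeff_eq_zero_of_natDegree_lt (by simp at hj; omega), zero_mul]

lemma Phi_orth {k : ℕ} {p : Polynomial ℂ} (h : p.natDegree < k) (N : ℕ) (q : Polynomial ℂ) :
    Phi N p (X^k * q) = 0 := by
  unfold Phi
  refine Finset.sum_eq_zero fun j _ => ?_
  rw [coeff_X_pow_mul']
  split_ifs with hk
  · rw [coeff_eq_zero_of_natDegree_lt (lt_of_lt_of_le h hk), zero_mul]
  · rw [mul_zero]

lemma Phi_shift (N k : ℕ) {q : Polynomial ℂ} (hq : q.natDegree ≤ N) (p : Polynomial ℂ) :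
    Phi (N+k) (X^k * p) (X^k * q) = Phi N p q := by
  rw [Phi_eq_coeff, Phi_eq_coeff]
  rw [show reflect (N+k) (X^k * q) = reflect k (X^k) * reflect N q by
      rw [Nat.add_comm N k]; exact reflect_mul _ _ (natDegree_X_pow_le _) hq, reflect_monomial,
    revAt_le (le_refl k), Nat.sub_self, pow_zero, one_mul]
  rw [show X^k * p * reflect N q = X^k * (p * reflect N q) by ring, coeff_X_pow_mul]

lemma coeff_comp_neg (p : Polynomial ℂ) (j : ℕ) :
    (p.comp (-X)).coeff j = (-1)^j * p.coeff j := by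
  induction p using Polynomial.induction_on' with
  | add f g hf hg => rw [add_comp, coeff_add, hf, hg, coeff_add, mul_add]
  | monomial n a =>
    rw [← C_mul_X_pow_eq_monomial, mul_comp, C_comp, pow_comp, X_comp]
    rw [show (-X : Polynomial ℂ)^n = C ((-1)^n) * X^n by
      rw [neg_pow, map_pow, map_neg, map_one]]
    rw [coeff_C_mul, coeff_C_mul, coeff_C_mul, coeff_X_pow]
    by_cases h : j = n
    · subst h; ring
    · simp [h]

lemma natDegree_comp_neg_le (p : Polynomial ℂ) :
    (p.comp (-X)).natDegree ≤ p.natDegree := by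
  rw [natDegree_le_iff_coeff_eq_zero]
  intro M hM
  rw [coeff_comp_neg, coeff_eq_zero_of_natDegree_lt hM, mul_zero]

lemma Phi_neg_comp (N : ℕ) (p q : Polynomial ℂ) :
    Phi N (p.comp (-X)) (q.comp (-X)) = Phi N p q := by
  unfold Phi
  refine Finset.sum_congr rfl fun j _ => ?_
  rw [coeff_comp_neg, coeff_comp_neg]
  have h1 : ((-1 : ℂ))^j * (-1)^j = 1 := by
    rw [← pow_add, ← two_mul, pow_mul]; norm_num
  calc (-1:ℂ)^j * p.coeff j * ((-1)^j * q.coeff j)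
      = ((-1:ℂ)^j * (-1)^j) * (p.coeff j * q.coeff j) := by ring
    _ = p.coeff j * q.coeff j := by rw [h1, one_mul]

lemma reflect_reflect' (N : ℕ) (p : Polynomial ℂ) : reflect N (reflect N p) = p := by
  ext i
  rw [coeff_reflect, coeff_reflect, revAt_invol]

lemma reflect_shift {N : ℕ} {p : Polynomial ℂ} (h : p.natDegree ≤ N) (k : ℕ) :
    reflect (N+k) p = X^k * reflect N p := by
  ext j
  rw [coeff_reflect, coeff_X_pow_mul']
  split_ifs with hk
  · rw [coeff_reflect]
    by_cases hj : j ≤ N + k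
    · rw [revAt_le hj, revAt_le (by omega : j - k ≤ N)]
      congr 1
      omega
    · rw [revAt_eq_self_of_lt (by omega), revAt_eq_self_of_lt (by omega)]
      rw [coeff_eq_zero_of_natDegree_lt (by omega), coeff_eq_zero_of_natDegree_lt (by omega)]
  · by_cases hj : j ≤ N + k
    · rw [revAt_le hj]
      exact coeff_eq_zero_of_natDegree_lt (by omega)
    · rw [revAt_eq_self_of_lt (by omega)]
      exact coeff_eq_zero_of_natDegree_lt (by omega)

lemma reflect_comp_neg {N : ℕ} {p : Polynomial ℂ} (h : p.natDegree ≤ N) :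
    reflect N (p.comp (-X)) = C ((-1 : ℂ)^N) * (reflect N p).comp (-X) := by
  ext j
  rw [coeff_reflect, coeff_C_mul, coeff_comp_neg, coeff_comp_neg, coeff_reflect]
  by_cases hj : j ≤ N
  · rw [revAt_le hj]
    have e : (-1 : ℂ)^(N - j) = (-1)^N * (-1)^j := by
      have : ((-1 : ℂ))^(N - j) * ((-1 : ℂ))^j = (-1)^N := by
        rw [← pow_add]; congr 1; omega
      calc (-1 : ℂ)^(N-j) = (-1)^(N-j) * ((-1)^j * (-1)^j) := by
            rw [← pow_add, ← two_mul, pow_mul]; norm_num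
        _ = ((-1)^(N-j) * (-1)^j) * (-1)^j := by ring
        _ = (-1)^N * (-1)^j := by rw [this]
    rw [e]; ring
  · rw [revAt_eq_self_of_lt (by omega)]
    rw [coeff_eq_zero_of_natDegree_lt (by omega : p.natDegree < j)]
    ring

end BMaux

namespace BMaux
open Polynomial

def Rc (p : Polynomial ℂ) : Prop := ∀ j, (starRingEnd ℂ) (p.coeff j) = p.coeff j

lemma Rc.mul {p q : Polynomial ℂ} (hp : Rc p) (hq : Rc q) : Rc (p*q) := by
  intro n
  rw [coeff_mul, map_sum]
  exact Finset.sum_congr rfl fun ij _ => by rw [map_mul, hp, hq]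

lemma Rc.add {p q : Polynomial ℂ} (hp : Rc p) (hq : Rc q) : Rc (p+q) := by
  intro n; rw [coeff_add, map_add, hp, hq]

lemma Rc.comp_neg {p : Polynomial ℂ} (hp : Rc p) : Rc (p.comp (-X)) := by
  intro n
  rw [coeff_comp_neg, map_mul, map_pow, map_neg, map_one, hp]

lemma Rc.reflect {p : Polynomial ℂ} (hp : Rc p) (N : ℕ) : Rc (Polynomial.reflect N p) := by
  intro n; rw [coeff_reflect, hp]

lemma Rc.X_pow_mul {p : Polynomial ℂ} (hp : Rc p) (k : ℕ) : Rc (X^k * p) := by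
  intro n
  rw [coeff_X_pow_mul']
  split_ifs with h
  · exact hp _
  · exact map_zero _

noncomputable def S (N : ℕ) (p : Polynomial ℂ) : ℝ :=
  ∑ j ∈ Finset.range (N+1), ‖p.coeff j‖^2

lemma Phi_self {p : Polynomial ℂ} (hp : Rc p) (N : ℕ) :
    Phi N p p = ((S N p : ℝ) : ℂ) := by
  unfold Phi S
  rw [Complex.ofReal_sum]
  refine Finset.sum_congr rfl fun j _ => ?_
  nth_rewrite 2 [← hp j]
  rw [Complex.mul_conj, Complex.sq_norm]

lemma S_mono {p : Polynomial ℂ} {M N : ℕ} (h : M ≤ N) (hp : p.natDegree ≤ M) :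
    S N p = S M p := by
  unfold S
  rw [← Finset.sum_subset (Finset.range_subset_range.mpr (by omega : M+1 ≤ N+1))]
  intro j _ hj
  rw [coeff_eq_zero_of_natDegree_lt (by simp at hj; omega)]
  simp

lemma n2_S {p : Polynomial ℂ} {N : ℕ} (h : p.natDegree ≤ N) : n2 p = S N p :=
  parseval p (Nat.lt_succ_of_le h)

lemma n4_S {p : Polynomial ℂ} {N : ℕ} (h : (p*p).natDegree ≤ N) : n4 p = S N (p*p) := by
  unfold n4 S
  rw [← parseval (p*p) (Nat.lt_succ_of_le h)]
  congr 1
  apply intervalIntegral.integral_congr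
  intro θ _
  simp only [eval_mul, norm_mul]
  ring

lemma vprod_S {p : Polynomial ℂ} {N : ℕ} (h : (p * p.comp (-X)).natDegree ≤ N) :
    vprod p = S N (p * p.comp (-X)) := by
  unfold vprod S
  rw [← parseval _ (Nat.lt_succ_of_le h)]
  congr 1
  apply intervalIntegral.integral_congr
  intro θ _
  simp [eval_mul, eval_comp, eval_neg, eval_X]

def Lw (p : Polynomial ℂ) : Prop := ∀ j ≤ p.natDegree, p.coeff j = 1 ∨ p.coeff j = -1

lemma Lw.Rc {p : Polynomial ℂ} (hp : Lw p) : Rc p := by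
  intro j
  by_cases h : j ≤ p.natDegree
  · rcases hp j h with h1 | h1 <;> rw [h1] <;> simp
  · rw [coeff_eq_zero_of_natDegree_lt (by omega), map_zero]

end BMaux

namespace BMaux
open Polynomial

lemma natDegree_reflect_le {p : Polynomial ℂ} {N : ℕ} (h : p.natDegree ≤ N) :
    (Polynomial.reflect N p).natDegree ≤ N := by
  rw [natDegree_le_iff_coeff_eq_zero]
  intro M hM
  rw [coeff_reflect, revAt_eq_self_of_lt hM]
  exact coeff_eq_zero_of_natDegree_lt (by omega)

lemma dagger_coeff (p : Polynomial ℂ) (j : ℕ) :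
    (dagger p).coeff j = if j ≤ p.natDegree then (starRingEnd ℂ) (p.coeff (p.natDegree - j)) else 0 := by
  unfold dagger
  rw [finset_sum_coeff]
  simp only [coeff_C_mul, coeff_X_pow, mul_ite, mul_one, mul_zero]
  rw [Finset.sum_ite_eq (Finset.range (p.natDegree + 1)) j
    (fun i => (starRingEnd ℂ) (p.coeff (p.natDegree - i)))]
  simp [Nat.lt_succ_iff]

lemma dagger_eq {p : Polynomial ℂ} (hp : Rc p) :
    dagger p = Polynomial.reflect p.natDegree p := by
  ext j
  rw [dagger_coeff, coeff_reflect]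
  split_ifs with h
  · rw [hp, revAt_le h]
  · rw [revAt_eq_self_of_lt (by omega)]
    exact (coeff_eq_zero_of_natDegree_lt (by omega)).symm

end BMaux

namespace BMaux
open Polynomial

lemma Phi_expand3 (N : ℕ) (A B C' : Polynomial ℂ) :
    Phi N (A+B+C') (A+B+C') = Phi N A A + Phi N B B + Phi N C' C'
      + 2*Phi N A B + 2*Phi N A C' + 2*Phi N B C' := by
  simp only [Phi_add_left, Phi_add_right]
  rw [Phi_comm N B A, Phi_comm N C' A, Phi_comm N C' B]
  ring

lemma neg_one_sq_pow (d : ℕ) : ((-1:ℂ)^d) * ((-1:ℂ)^d) = 1 := by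
  rw [← pow_add, ← two_mul, pow_mul]
  norm_num

section Step

variable {g : Polynomial ℂ}

lemma step_core (hg : Lw g) :
    Lw (g + X^(g.natDegree+1) * ((Polynomial.reflect g.natDegree g).comp (-X)))
    ∧ (g + X^(g.natDegree+1) * ((Polynomial.reflect g.natDegree g).comp (-X))).natDegree
        = 2*g.natDegree+1
    ∧ Phi (2*g.natDegree+1)
        (g + X^(g.natDegree+1) * ((Polynomial.reflect g.natDegree g).comp (-X)))
        (g + X^(g.natDegree+1) * ((Polynomial.reflect g.natDegree g).comp (-X)))
        = 2 * Phi g.natDegree g g := by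
  set d := g.natDegree with hd
  set gh := Polynomial.reflect d g with hgh_def
  set r := gh.comp (-X) with hr_def
  set h := g + X^(d+1) * r with hh_def
  have hdg : g.natDegree ≤ d := le_of_eq hd.symm
  have hgh : gh.natDegree ≤ d := natDegree_reflect_le hdg
  have hr : r.natDegree ≤ d := le_trans (natDegree_comp_neg_le gh) hgh
  have hXr : (X^(d+1) * r).natDegree ≤ 2*d+1 :=
    le_trans (natDegree_mul_le) (by simp [natDegree_X_pow]; omega)
  have hhd_le : h.natDegree ≤ 2*d+1 :=
    le_trans (natDegree_add_le _ _) (max_le (by omega) hXr)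
  have hcoeff_h : ∀ j, h.coeff j
      = g.coeff j + (if d+1 ≤ j then r.coeff (j - (d+1)) else 0) := by
    intro j
    rw [hh_def, coeff_add, coeff_X_pow_mul']
  have hrc : ∀ i, r.coeff i = (-1)^i * g.coeff (revAt d i) := by
    intro i
    rw [hr_def, coeff_comp_neg, hgh_def, coeff_reflect]
  -- Littlewood property of h
  have hLh : Lw h := by
    intro j hj
    have hj' : j ≤ 2*d+1 := le_trans hj hhd_le
    rw [hcoeff_h]
    by_cases hjd : j ≤ d
    · rw [if_neg (by omega), add_zero]
      exact hg j hjd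
    · rw [if_pos (by omega), coeff_eq_zero_of_natDegree_lt (by omega), zero_add,
        hrc, revAt_le (by omega : j - (d+1) ≤ d)]
      rcases hg (d - (j - (d+1))) (by omega) with h1 | h1 <;>
        rcases Nat.even_or_odd (j - (d+1)) with h2 | h2 <;>
          simp [h1, h2.neg_one_pow]
  have hhd : h.natDegree = 2*d+1 := by
    refine le_antisymm hhd_le (le_natDegree_of_ne_zero ?_)
    rw [hcoeff_h, if_pos (by omega), coeff_eq_zero_of_natDegree_lt (by omega), zero_add,
      hrc, show 2*d+1 - (d+1) = d by omega, revAt_le (le_refl d), Nat.sub_self]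
    rcases hg 0 (by omega) with h1 | h1 <;> rcases Nat.even_or_odd d with h2 | h2 <;>
      simp [h1, h2.neg_one_pow]
  refine ⟨hLh, hhd, ?_⟩
  -- Phi identity (I)
  have e1 : Phi (2*d+1) h h = Phi (2*d+1) g g + Phi (2*d+1) g (X^(d+1)*r)
      + Phi (2*d+1) (X^(d+1)*r) g + Phi (2*d+1) (X^(d+1)*r) (X^(d+1)*r) := by
    rw [hh_def, Phi_add_left, Phi_add_right, Phi_add_right]
    ring
  rw [e1, Phi_mono (by omega : d ≤ 2*d+1) hdg, Phi_orth (by omega : g.natDegree < d+1),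
    Phi_comm (2*d+1) (X^(d+1)*r) g, Phi_orth (by omega : g.natDegree < d+1),
    show 2*d+1 = d + (d+1) by ring, Phi_shift d (d+1) hr]
  have e2 : Phi d r r = Phi d g g := by
    rw [hr_def, Phi_neg_comp, Phi_eq_coeff, Phi_eq_coeff, hgh_def, reflect_reflect']
    rw [mul_comm]
  rw [e2]
  ring

end Step
end BMaux

namespace BMaux
open Polynomial

variable {g : Polynomial ℂ} {d : ℕ}

lemma refl_g2 (hdg : g.natDegree ≤ d) :
    Polynomial.reflect (2*d) (g*g) = (Polynomial.reflect d g) * (Polynomial.reflect d g) := by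
  rw [show 2*d = d+d by ring]
  exact reflect_mul _ _ hdg hdg

lemma refl_v (hdg : g.natDegree ≤ d) :
    Polynomial.reflect (2*d) (g * Polynomial.reflect d g) = (Polynomial.reflect d g) * g := by
  rw [show 2*d = d+d by ring, reflect_mul _ _ hdg (natDegree_reflect_le hdg), reflect_reflect']

lemma refl_tg (hdg : g.natDegree ≤ d) :
    Polynomial.reflect d (g.comp (-X)) = C ((-1:ℂ)^d) * ((Polynomial.reflect d g).comp (-X)) :=
  reflect_comp_neg hdg

lemma refl_r (hdg : g.natDegree ≤ d) :
    Polynomial.reflect d ((Polynomial.reflect d g).comp (-X)) = C ((-1:ℂ)^d) * (g.comp (-X)) := by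
  rw [reflect_comp_neg (natDegree_reflect_le hdg), reflect_reflect']

lemma refl_u (hdg : g.natDegree ≤ d) :
    Polynomial.reflect (2*d) (g * g.comp (-X))
      = C ((-1:ℂ)^d) * ((Polynomial.reflect d g) * ((Polynomial.reflect d g).comp (-X))) := by
  rw [show 2*d = d+d by ring,
    reflect_mul _ _ hdg (le_trans (natDegree_comp_neg_le g) hdg), refl_tg hdg]
  ring

lemma refl_m (hdg : g.natDegree ≤ d) :
    Polynomial.reflect (2*d) ((Polynomial.reflect d g) * ((Polynomial.reflect d g).comp (-X)))
      = C ((-1:ℂ)^d) * (g * (g.comp (-X))) := by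
  rw [show 2*d = d+d by ring,
    reflect_mul _ _ (natDegree_reflect_le hdg)
      (le_trans (natDegree_comp_neg_le _) (natDegree_reflect_le hdg)),
    reflect_reflect', refl_r hdg]
  ring

lemma refl_gr (hdg : g.natDegree ≤ d) :
    Polynomial.reflect (2*d) (g * ((Polynomial.reflect d g).comp (-X)))
      = C ((-1:ℂ)^d) * ((Polynomial.reflect d g) * (g.comp (-X))) := by
  rw [show 2*d = d+d by ring,
    reflect_mul _ _ hdg (le_trans (natDegree_comp_neg_le _) (natDegree_reflect_le hdg)),
    refl_r hdg]
  ring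

lemma refl_r2 (hdg : g.natDegree ≤ d) :
    Polynomial.reflect (2*d)
        (((Polynomial.reflect d g).comp (-X)) * ((Polynomial.reflect d g).comp (-X)))
      = (g.comp (-X)) * (g.comp (-X)) := by
  rw [show 2*d = d+d by ring,
    reflect_mul _ _ (le_trans (natDegree_comp_neg_le _) (natDegree_reflect_le hdg))
      (le_trans (natDegree_comp_neg_le _) (natDegree_reflect_le hdg)),
    refl_r hdg]
  rw [show C ((-1:ℂ)^d) * (g.comp (-X)) * (C ((-1:ℂ)^d) * (g.comp (-X)))
      = C ((-1:ℂ)^d * ((-1:ℂ)^d) ) * ((g.comp (-X)) * (g.comp (-X))) by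
    rw [map_mul]; ring]
  rw [neg_one_sq_pow, map_one, one_mul]

lemma val_vv (hdg : g.natDegree ≤ d) :
    Phi (2*d) (g * Polynomial.reflect d g) (g * Polynomial.reflect d g)
      = Phi (2*d) (g*g) (g*g) := by
  rw [Phi_eq_coeff, Phi_eq_coeff, refl_v hdg, refl_g2 hdg]
  congr 1
  ring

lemma val_uu (hdg : g.natDegree ≤ d) :
    Phi (2*d) (g * g.comp (-X)) (g * g.comp (-X))
      = ((-1:ℂ)^d) * (((g * Polynomial.reflect d g)
          * ((g * Polynomial.reflect d g).comp (-X))).coeff (2*d)) := by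
  rw [Phi_eq_coeff, refl_u hdg, mul_comp]
  rw [show g * g.comp (-X) * (C ((-1:ℂ)^d) * (Polynomial.reflect d g
        * (Polynomial.reflect d g).comp (-X)))
      = C ((-1:ℂ)^d) * (g * Polynomial.reflect d g
        * (g.comp (-X) * (Polynomial.reflect d g).comp (-X))) by ring]
  rw [coeff_C_mul]

lemma val_vvt (hdg : g.natDegree ≤ d) :
    Phi (2*d) (g * Polynomial.reflect d g) ((g * Polynomial.reflect d g).comp (-X))
      = ((g * Polynomial.reflect d g) * ((g * Polynomial.reflect d g).comp (-X))).coeff (2*d) := by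
  have hv : (g * Polynomial.reflect d g).natDegree ≤ 2*d :=
    le_trans natDegree_mul_le (by have := natDegree_reflect_le hdg; omega)
  rw [Phi_eq_coeff, reflect_comp_neg hv]
  rw [show ((-1:ℂ))^(2*d) = 1 by rw [pow_mul]; norm_num, map_one, one_mul]
  congr 2
  rw [refl_v hdg, mul_comm]

end BMaux

namespace BMaux
open Polynomial

variable {g : Polynomial ℂ} {d : ℕ}

lemma val_grgr (hdg : g.natDegree ≤ d) :
    Phi (2*d) (g * ((Polynomial.reflect d g).comp (-X))) (g * ((Polynomial.reflect d g).comp (-X)))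
      = Phi (2*d) (g * g.comp (-X)) (g * g.comp (-X)) := by
  rw [Phi_eq_coeff, refl_gr hdg, val_uu hdg, mul_comp]
  rw [show g * (Polynomial.reflect d g).comp (-X)
        * (C ((-1:ℂ)^d) * (Polynomial.reflect d g * g.comp (-X)))
      = C ((-1:ℂ)^d) * (g * Polynomial.reflect d g
        * (g.comp (-X) * (Polynomial.reflect d g).comp (-X))) by ring]
  rw [coeff_C_mul]

lemma val_r2r2 (hdg : g.natDegree ≤ d) :
    Phi (2*d) (((Polynomial.reflect d g).comp (-X)) * ((Polynomial.reflect d g).comp (-X)))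
        (((Polynomial.reflect d g).comp (-X)) * ((Polynomial.reflect d g).comp (-X)))
      = Phi (2*d) (g*g) (g*g) := by
  rw [Phi_eq_coeff, refl_r2 hdg, Phi_eq_coeff (2*d) (g*g), refl_g2 hdg]
  have e : (Polynomial.reflect d g).comp (-X) * (Polynomial.reflect d g).comp (-X)
        * (g.comp (-X) * g.comp (-X))
      = (g*g*(Polynomial.reflect d g * Polynomial.reflect d g)).comp (-X) := by
    simp only [mul_comp]
    ring
  rw [e, coeff_comp_neg, show ((-1:ℂ))^(2*d) = 1 by rw [pow_mul]; norm_num, one_mul]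

lemma val_cross (hdg : g.natDegree ≤ d) :
    Phi (4*d+2) (g*g) (X^(d+1)*(g * ((Polynomial.reflect d g).comp (-X))))
      + Phi (4*d+2) (X^(d+1)*(g * ((Polynomial.reflect d g).comp (-X))))
          (X^(2*d+2)*(((Polynomial.reflect d g).comp (-X)) * ((Polynomial.reflect d g).comp (-X))))
      = 0 := by
  have hgh := natDegree_reflect_le hdg
  have hr : ((Polynomial.reflect d g).comp (-X)).natDegree ≤ d :=
    le_trans (natDegree_comp_neg_le _) hgh
  have hgr : (g * ((Polynomial.reflect d g).comp (-X))).natDegree ≤ 2*d :=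
    le_trans natDegree_mul_le (by omega)
  have hr2 : (((Polynomial.reflect d g).comp (-X)) * ((Polynomial.reflect d g).comp (-X))).natDegree
      ≤ 2*d := le_trans natDegree_mul_le (by omega)
  have R1 : Polynomial.reflect (4*d+2) (X^(d+1)*(g * ((Polynomial.reflect d g).comp (-X))))
      = X^(d+1) * (C ((-1:ℂ)^d) * (Polynomial.reflect d g * g.comp (-X))) := by
    rw [show 4*d+2 = (d+1)+(3*d+1) by ring,
      reflect_mul _ _ (natDegree_X_pow_le _) (le_trans hgr (by omega)),
      reflect_monomial, revAt_le (le_refl (d+1)), Nat.sub_self, pow_zero, one_mul,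
      show 3*d+1 = 2*d+(d+1) by ring, reflect_shift hgr (d+1), refl_gr hdg]
  have R2 : Polynomial.reflect (4*d+2)
        (X^(2*d+2)*(((Polynomial.reflect d g).comp (-X)) * ((Polynomial.reflect d g).comp (-X))))
      = g.comp (-X) * g.comp (-X) := by
    rw [show 4*d+2 = (2*d+2)+(2*d) by ring,
      reflect_mul _ _ (natDegree_X_pow_le _) hr2,
      reflect_monomial, revAt_le (le_refl (2*d+2)), Nat.sub_self, pow_zero, one_mul,
      refl_r2 hdg]
  have T1 : Phi (4*d+2) (g*g) (X^(d+1)*(g * ((Polynomial.reflect d g).comp (-X))))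
      = ((-1:ℂ)^d) * ((g*g*(Polynomial.reflect d g * g.comp (-X))).coeff (3*d+1)) := by
    rw [Phi_eq_coeff, R1]
    rw [show g*g*(X^(d+1) * (C ((-1:ℂ)^d) * (Polynomial.reflect d g * g.comp (-X))))
        = C ((-1:ℂ)^d) * (X^(d+1) * (g*g*(Polynomial.reflect d g * g.comp (-X)))) by ring]
    rw [coeff_C_mul, show 4*d+2 = (3*d+1)+(d+1) by ring, coeff_X_pow_mul]
  have T2 : Phi (4*d+2) (X^(d+1)*(g * ((Polynomial.reflect d g).comp (-X))))
        (X^(2*d+2)*(((Polynomial.reflect d g).comp (-X)) * ((Polynomial.reflect d g).comp (-X))))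
      = ((-1:ℂ)^(3*d+1)) * ((g*g*(Polynomial.reflect d g * g.comp (-X))).coeff (3*d+1)) := by
    rw [Phi_eq_coeff, R2]
    rw [show X^(d+1)*(g * ((Polynomial.reflect d g).comp (-X))) * (g.comp (-X) * g.comp (-X))
        = X^(d+1) * ((g * ((Polynomial.reflect d g).comp (-X))) * (g.comp (-X) * g.comp (-X)))
        by ring]
    rw [show 4*d+2 = (3*d+1)+(d+1) by ring, coeff_X_pow_mul]
    have e : (g * ((Polynomial.reflect d g).comp (-X))) * (g.comp (-X) * g.comp (-X))
        = (g*g*(Polynomial.reflect d g * g.comp (-X))).comp (-X) := by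
      simp only [mul_comp, comp_neg_X_comp_neg_X]
      ring
    rw [e, coeff_comp_neg]
  rw [T1, T2, show ((-1:ℂ))^(3*d+1) = -((-1:ℂ)^d) by
    rw [show 3*d+1 = d + (2*d+1) by ring, pow_add, pow_add, pow_mul]; norm_num]
  ring

lemma step_II (hdg : g.natDegree ≤ d) :
    Phi (4*d+2)
        ((g + X^(d+1) * ((Polynomial.reflect d g).comp (-X)))
          * (g + X^(d+1) * ((Polynomial.reflect d g).comp (-X))))
        ((g + X^(d+1) * ((Polynomial.reflect d g).comp (-X)))
          * (g + X^(d+1) * ((Polynomial.reflect d g).comp (-X))))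
      = 2 * Phi (2*d) (g*g) (g*g)
        + 4 * Phi (2*d) (g * g.comp (-X)) (g * g.comp (-X)) := by
  have hgh := natDegree_reflect_le hdg
  have hr : ((Polynomial.reflect d g).comp (-X)).natDegree ≤ d :=
    le_trans (natDegree_comp_neg_le _) hgh
  have hg2 : (g*g).natDegree ≤ 2*d := le_trans natDegree_mul_le (by omega)
  have hgr : (g * ((Polynomial.reflect d g).comp (-X))).natDegree ≤ 2*d :=
    le_trans natDegree_mul_le (by omega)
  have hr2 : (((Polynomial.reflect d g).comp (-X)) * ((Polynomial.reflect d g).comp (-X))).natDegree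
      ≤ 2*d := le_trans natDegree_mul_le (by omega)
  have ehh : (g + X^(d+1) * ((Polynomial.reflect d g).comp (-X)))
        * (g + X^(d+1) * ((Polynomial.reflect d g).comp (-X)))
      = (g*g) + C 2 * (X^(d+1) * (g * ((Polynomial.reflect d g).comp (-X))))
        + X^(2*d+2) * (((Polynomial.reflect d g).comp (-X)) * ((Polynomial.reflect d g).comp (-X))) := by
    rw [show (C (2:ℂ)) = (2 : Polynomial ℂ) from map_ofNat C 2]
    ring
  rw [ehh, Phi_expand3]
  simp only [Phi_C_mul_left, Phi_C_mul_right]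
  rw [Phi_mono (by omega : 2*d ≤ 4*d+2) hg2]
  rw [show (4*d+2) = (3*d+1)+(d+1) by ring]
  rw [Phi_shift (3*d+1) (d+1) (le_trans hgr (by omega))]
  rw [Phi_mono (by omega : 2*d ≤ 3*d+1) hgr, val_grgr hdg]
  rw [show (3*d+1)+(d+1) = 2*d + (2*d+2) by ring]
  rw [Phi_shift (2*d) (2*d+2) hr2, val_r2r2 hdg]
  rw [Phi_orth (by omega : (g*g).natDegree < 2*d+2)]
  have hc := val_cross hdg
  rw [show 2*d + (2*d+2) = 4*d+2 by ring]
  linear_combination (4:ℂ) * hc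


end BMaux

namespace BMaux
open Polynomial

variable {g : Polynomial ℂ} {d : ℕ}

lemma refl_w (hdg : g.natDegree ≤ d) :
    Polynomial.reflect (2*d) (C ((-1:ℂ)^(d+1)) * (g * Polynomial.reflect d g)
        + (g.comp (-X)) * ((Polynomial.reflect d g).comp (-X)))
      = C ((-1:ℂ)^(d+1)) * (g * Polynomial.reflect d g)
        + (g.comp (-X)) * ((Polynomial.reflect d g).comp (-X)) := by
  have htg : (g.comp (-X)).natDegree ≤ d := le_trans (natDegree_comp_neg_le _) hdg
  have hrr : ((Polynomial.reflect d g).comp (-X)).natDegree ≤ d :=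
    le_trans (natDegree_comp_neg_le _) (natDegree_reflect_le hdg)
  rw [reflect_add, reflect_C_mul, refl_v hdg]
  rw [show Polynomial.reflect (2*d) ((g.comp (-X)) * ((Polynomial.reflect d g).comp (-X)))
      = Polynomial.reflect (d+d) ((g.comp (-X)) * ((Polynomial.reflect d g).comp (-X))) by
    rw [two_mul]]
  rw [reflect_mul _ _ htg hrr, refl_tg hdg, refl_r hdg]
  rw [show C ((-1:ℂ)^d) * ((Polynomial.reflect d g).comp (-X)) * (C ((-1:ℂ)^d) * (g.comp (-X)))
      = C ((-1:ℂ)^d * (-1:ℂ)^d) * (((Polynomial.reflect d g).comp (-X)) * (g.comp (-X))) by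
    rw [map_mul]; ring]
  rw [neg_one_sq_pow, map_one, one_mul]
  ring

lemma w_deg (hdg : g.natDegree ≤ d) :
    (C ((-1:ℂ)^(d+1)) * (g * Polynomial.reflect d g)
      + (g.comp (-X)) * ((Polynomial.reflect d g).comp (-X))).natDegree ≤ 2*d := by
  have htg : (g.comp (-X)).natDegree ≤ d := le_trans (natDegree_comp_neg_le _) hdg
  have hrr : ((Polynomial.reflect d g).comp (-X)).natDegree ≤ d :=
    le_trans (natDegree_comp_neg_le _) (natDegree_reflect_le hdg)
  have h1 : (g * Polynomial.reflect d g).natDegree ≤ 2*d :=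
    le_trans natDegree_mul_le (by have := natDegree_reflect_le hdg; omega)
  refine le_trans (natDegree_add_le _ _) (max_le (le_trans (natDegree_C_mul_le _ _) h1) ?_)
  exact le_trans natDegree_mul_le (by omega)

lemma val_AB (hdg : g.natDegree ≤ d) :
    Phi (4*d+2) (g * g.comp (-X))
        (X^(d+1) * (C ((-1:ℂ)^(d+1)) * (g * Polynomial.reflect d g)
          + (g.comp (-X)) * ((Polynomial.reflect d g).comp (-X))))
      = ((g * g.comp (-X)) * (C ((-1:ℂ)^(d+1)) * (g * Polynomial.reflect d g)
          + (g.comp (-X)) * ((Polynomial.reflect d g).comp (-X)))).coeff (3*d+1) := by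
  rw [Phi_eq_coeff]
  rw [show 4*d+2 = (d+1)+(3*d+1) by ring,
    reflect_mul _ _ (natDegree_X_pow_le _) (le_trans (w_deg hdg) (by omega)),
    reflect_monomial, revAt_le (le_refl (d+1)), Nat.sub_self, pow_zero, one_mul,
    show 3*d+1 = 2*d+(d+1) by ring, reflect_shift (w_deg hdg) (d+1), refl_w hdg]
  rw [show g * g.comp (-X) * (X^(d+1) * (C ((-1:ℂ)^(d+1)) * (g * Polynomial.reflect d g)
        + (g.comp (-X)) * ((Polynomial.reflect d g).comp (-X))))
      = X^(d+1) * (g * g.comp (-X) * (C ((-1:ℂ)^(d+1)) * (g * Polynomial.reflect d g)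
        + (g.comp (-X)) * ((Polynomial.reflect d g).comp (-X)))) by ring]
  rw [show (d+1)+(2*d+(d+1)) = (2*d+(d+1))+(d+1) by ring, coeff_X_pow_mul]

lemma val_BC (hdg : g.natDegree ≤ d) :
    Phi (4*d+2)
        (X^(d+1) * (C ((-1:ℂ)^(d+1)) * (g * Polynomial.reflect d g)
          + (g.comp (-X)) * ((Polynomial.reflect d g).comp (-X))))
        (X^(2*d+2) * (Polynomial.reflect d g * ((Polynomial.reflect d g).comp (-X))))
      = ((-1:ℂ)^d) * (((g * g.comp (-X)) * (C ((-1:ℂ)^(d+1)) * (g * Polynomial.reflect d g)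
          + (g.comp (-X)) * ((Polynomial.reflect d g).comp (-X)))).coeff (3*d+1)) := by
  have hm : (Polynomial.reflect d g * ((Polynomial.reflect d g).comp (-X))).natDegree ≤ 2*d := by
    refine le_trans natDegree_mul_le ?_
    have h1 := natDegree_reflect_le hdg
    have h2 : ((Polynomial.reflect d g).comp (-X)).natDegree ≤ d :=
      le_trans (natDegree_comp_neg_le _) h1
    omega
  rw [Phi_eq_coeff]
  rw [show 4*d+2 = (2*d+2)+(2*d) by ring,
    reflect_mul _ _ (natDegree_X_pow_le _) hm,
    reflect_monomial, revAt_le (le_refl (2*d+2)), Nat.sub_self, pow_zero, one_mul,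
    refl_m hdg]
  rw [show X^(d+1) * (C ((-1:ℂ)^(d+1)) * (g * Polynomial.reflect d g)
        + (g.comp (-X)) * ((Polynomial.reflect d g).comp (-X)))
        * (C ((-1:ℂ)^d) * (g * g.comp (-X)))
      = C ((-1:ℂ)^d) * (X^(d+1) * ((g * g.comp (-X))
        * (C ((-1:ℂ)^(d+1)) * (g * Polynomial.reflect d g)
          + (g.comp (-X)) * ((Polynomial.reflect d g).comp (-X))))) by ring]
  rw [coeff_C_mul, show (2*d+2)+(2*d) = (3*d+1)+(d+1) by ring, coeff_X_pow_mul]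

end BMaux

namespace BMaux
open Polynomial

variable {g : Polynomial ℂ} {d : ℕ}

lemma step_III (hdg : g.natDegree ≤ d) :
    Phi (4*d+2)
        ((g + X^(d+1) * ((Polynomial.reflect d g).comp (-X)))
          * ((g + X^(d+1) * ((Polynomial.reflect d g).comp (-X))).comp (-X)))
        ((g + X^(d+1) * ((Polynomial.reflect d g).comp (-X)))
          * ((g + X^(d+1) * ((Polynomial.reflect d g).comp (-X))).comp (-X)))
      = 2 * Phi (2*d) (g*g) (g*g) := by
  have hgh := natDegree_reflect_le hdg
  have htg : (g.comp (-X)).natDegree ≤ d := le_trans (natDegree_comp_neg_le _) hdg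
  have hrr : ((Polynomial.reflect d g).comp (-X)).natDegree ≤ d :=
    le_trans (natDegree_comp_neg_le _) hgh
  have hu : (g * g.comp (-X)).natDegree ≤ 2*d := le_trans natDegree_mul_le (by omega)
  have hm : (Polynomial.reflect d g * ((Polynomial.reflect d g).comp (-X))).natDegree ≤ 2*d :=
    le_trans natDegree_mul_le (by omega)
  have eth : (g + X^(d+1) * ((Polynomial.reflect d g).comp (-X))).comp (-X)
      = g.comp (-X) + C ((-1:ℂ)^(d+1)) * (X^(d+1) * Polynomial.reflect d g) := by
    rw [add_comp, mul_comp, pow_comp, X_comp, comp_neg_X_comp_neg_X]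
    rw [show (-X : Polynomial ℂ)^(d+1) = C ((-1:ℂ)^(d+1)) * X^(d+1) by
      rw [neg_pow, map_pow, map_neg, map_one]]
    ring
  have ehth : (g + X^(d+1) * ((Polynomial.reflect d g).comp (-X)))
        * ((g + X^(d+1) * ((Polynomial.reflect d g).comp (-X))).comp (-X))
      = (g * g.comp (-X))
        + X^(d+1) * (C ((-1:ℂ)^(d+1)) * (g * Polynomial.reflect d g)
            + (g.comp (-X)) * ((Polynomial.reflect d g).comp (-X)))
        + C ((-1:ℂ)^(d+1)) * (X^(2*d+2)
            * (Polynomial.reflect d g * ((Polynomial.reflect d g).comp (-X)))) := by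
    rw [eth]
    ring
  rw [ehth, Phi_expand3]
  simp only [Phi_C_mul_left, Phi_C_mul_right]
  rw [val_AB hdg, val_BC hdg]
  rw [Phi_orth (show (g * g.comp (-X)).natDegree < 2*d+2 by omega)]
  rw [Phi_mono (by omega : 2*d ≤ 4*d+2) hu, val_uu hdg]
  rw [show (4*d+2) = (3*d+1)+(d+1) by ring,
    Phi_shift (3*d+1) (d+1) (le_trans (w_deg hdg) (by omega)),
    Phi_mono (by omega : 2*d ≤ 3*d+1) (w_deg hdg)]
  rw [show (3*d+1)+(d+1) = 2*d+(2*d+2) by ring, Phi_shift (2*d) (2*d+2) hm]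
  -- value of Phi (2d) m m
  have hmm : Phi (2*d) (Polynomial.reflect d g * ((Polynomial.reflect d g).comp (-X)))
        (Polynomial.reflect d g * ((Polynomial.reflect d g).comp (-X)))
      = ((-1:ℂ)^d) * (((g * Polynomial.reflect d g)
          * ((g * Polynomial.reflect d g).comp (-X))).coeff (2*d)) := by
    rw [Phi_eq_coeff, refl_m hdg]
    rw [show Polynomial.reflect d g * (Polynomial.reflect d g).comp (-X)
          * (C ((-1:ℂ)^d) * (g * g.comp (-X)))
        = C ((-1:ℂ)^d) * ((g * Polynomial.reflect d g)
          * (g.comp (-X) * ((Polynomial.reflect d g).comp (-X)))) by ring]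
    rw [coeff_C_mul, mul_comp]
  rw [hmm]
  -- expand Phi (2d) w w
  simp only [Phi_add_left, Phi_add_right, Phi_C_mul_left, Phi_C_mul_right]
  have hcomp : (g * Polynomial.reflect d g).comp (-X)
      = g.comp (-X) * (Polynomial.reflect d g).comp (-X) := by rw [mul_comp]
  have hss : Phi (2*d) (g.comp (-X) * (Polynomial.reflect d g).comp (-X))
        (g.comp (-X) * (Polynomial.reflect d g).comp (-X)) = Phi (2*d) (g*g) (g*g) := by
    rw [← hcomp, Phi_neg_comp, val_vv hdg]
  have hvs : Phi (2*d) (g * Polynomial.reflect d g)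
        (g.comp (-X) * (Polynomial.reflect d g).comp (-X))
      = ((g * Polynomial.reflect d g) * ((g * Polynomial.reflect d g).comp (-X))).coeff (2*d) := by
    rw [← hcomp, val_vvt hdg]
  have hsv : Phi (2*d) (g.comp (-X) * (Polynomial.reflect d g).comp (-X))
        (g * Polynomial.reflect d g)
      = ((g * Polynomial.reflect d g) * ((g * Polynomial.reflect d g).comp (-X))).coeff (2*d) := by
    rw [Phi_comm]; exact hvs
  rw [hss, hvs, hsv, val_vv hdg]
  have hc' : ((-1:ℂ))^(d+1) = -((-1:ℂ)^d) := by rw [pow_succ]; ring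
  rw [hc']
  linear_combination (Phi (2*d) (g*g) (g*g)
      + ((-1:ℂ)^d) * (((g * Polynomial.reflect d g)
          * ((g * Polynomial.reflect d g).comp (-X))).coeff (2*d))
      - 2 * (((g * g.comp (-X)) * (C (-((-1:ℂ)^d)) * (g * Polynomial.reflect d g)
          + (g.comp (-X)) * ((Polynomial.reflect d g).comp (-X)))).coeff (3*d+1)))
    * (neg_one_sq_pow d)

end BMaux

namespace BMaux
open Polynomial

lemma step_full {g : Polynomial ℂ} (hg : Lw g) :
    Lw (g + X^(g.natDegree+1) * ((dagger g).comp (-X)))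
    ∧ n2 (g + X^(g.natDegree+1) * ((dagger g).comp (-X))) = 2 * n2 g
    ∧ n4 (g + X^(g.natDegree+1) * ((dagger g).comp (-X))) = 2 * n4 g + 4 * vprod g
    ∧ vprod (g + X^(g.natDegree+1) * ((dagger g).comp (-X))) = 2 * n4 g := by
  rw [dagger_eq hg.Rc]
  obtain ⟨hLh, hdh, hPhiI⟩ := step_core hg
  have hdg : g.natDegree ≤ g.natDegree := le_rfl
  set d := g.natDegree with hd
  set h := g + X^(d+1) * ((Polynomial.reflect d g).comp (-X)) with hh
  have Rcg : Rc g := hg.Rc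
  have Rch : Rc h := hLh.Rc
  have hg2 : (g*g).natDegree ≤ 2*d := le_trans natDegree_mul_le (by omega)
  have hgu : (g * g.comp (-X)).natDegree ≤ 2*d :=
    le_trans natDegree_mul_le (by have := natDegree_comp_neg_le g; omega)
  have hh2 : (h*h).natDegree ≤ 4*d+2 := le_trans natDegree_mul_le (by omega)
  have hhu : (h * h.comp (-X)).natDegree ≤ 4*d+2 :=
    le_trans natDegree_mul_le (by have := natDegree_comp_neg_le h; omega)
  refine ⟨hLh, ?_, ?_, ?_⟩
  · rw [n2_S (le_of_eq hdh), n2_S (le_refl d)]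
    have : ((S (2*d+1) h : ℝ) : ℂ) = ((2 * S d g : ℝ) : ℂ) := by
      push_cast
      rw [← Phi_self Rch, ← Phi_self Rcg]
      exact hPhiI
    exact_mod_cast this
  · rw [n4_S hh2, n4_S hg2, vprod_S hgu]
    have : ((S (4*d+2) (h*h) : ℝ) : ℂ)
        = ((2 * S (2*d) (g*g) + 4 * S (2*d) (g * g.comp (-X)) : ℝ) : ℂ) := by
      push_cast
      rw [← Phi_self (Rcg.mul Rcg), ← Phi_self (Rcg.mul (Rcg.comp_neg)),
        ← Phi_self (Rch.mul Rch)]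
      exact step_II hdg
    exact_mod_cast this
  · rw [vprod_S hhu, n4_S hg2]
    have : ((S (4*d+2) (h * h.comp (-X)) : ℝ) : ℂ) = ((2 * S (2*d) (g*g) : ℝ) : ℂ) := by
      push_cast
      rw [← Phi_self (Rcg.mul Rcg), ← Phi_self (Rch.mul (Rch.comp_neg))]
      exact step_III hdg
    exact_mod_cast this

end BMaux

/-- Borwein-Mossinghoff formula for ‖f_n‖₄⁴/‖f_n‖₂⁴ along a stem of
Rudin-Shapiro-like Littlewood polynomials. -/
theorem borwein_mossinghoff_formula (f : ℕ → Polynomial ℂ)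
    (hLittlewood : ∀ j ≤ (f 0).natDegree, (f 0).coeff j = 1 ∨ (f 0).coeff j = -1)
    (hrec : ∀ n, f (n + 1) = f n +
      Polynomial.X ^ ((f n).natDegree + 1) * (dagger (f n)).comp (-Polynomial.X))
    (n : ℕ) :
    n4 (f n) / (n2 (f n)) ^ 2
      = (2/3) * ((n4 (f 0) + vprod (f 0)) / (n2 (f 0)) ^ 2)
        + (-(1:ℝ)/2) ^ n * (1/3) * ((n4 (f 0) - 2 * vprod (f 0)) / (n2 (f 0)) ^ 2) := by
  have key : ∀ n, BMaux.Lw (f n) ∧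
      n2 (f n) = 2^n * n2 (f 0) ∧
      n4 (f n) = (2/3)*(n4 (f 0) + vprod (f 0)) * 4^n
        + (1/3)*(n4 (f 0) - 2*vprod (f 0)) * (-2)^n ∧
      vprod (f n) = (1/3)*(n4 (f 0) + vprod (f 0)) * 4^n
        - (1/3)*(n4 (f 0) - 2*vprod (f 0)) * (-2)^n := by
    intro n
    induction n with
    | zero => exact ⟨hLittlewood, by norm_num, by ring, by ring⟩
    | succ n ih =>
      obtain ⟨hL, h2, h4, hv⟩ := ih
      obtain ⟨hL', h2', h4', hv'⟩ := BMaux.step_full hL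
      rw [← hrec n] at hL' h2' h4' hv'
      refine ⟨hL', ?_, ?_, ?_⟩
      · rw [h2', h2]; ring
      · rw [h4', h4, hv]; ring
      · rw [hv', h4]; ring
  obtain ⟨hL, h2, h4, hv⟩ := key n
  have hpos : 1 ≤ n2 (f 0) := by
    rw [BMaux.n2_S (le_refl (f 0).natDegree)]
    unfold BMaux.S
    have h0 : ‖(f 0).coeff 0‖^2 = 1 := by
      rcases hLittlewood 0 (Nat.zero_le _) with h1 | h1 <;> rw [h1] <;> simp
    calc (1:ℝ) = ‖(f 0).coeff 0‖^2 := h0.symm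
      _ ≤ _ := Finset.single_le_sum (f := fun j => ‖(f 0).coeff j‖^2)
          (fun i _ => by positivity) (Finset.mem_range.mpr (by omega))
  have hne : n2 (f 0) ≠ 0 := by linarith
  rw [h2, h4, mul_pow, show ((2:ℝ)^n)^2 = 4^n by
    rw [← pow_mul, mul_comm, pow_mul]; norm_num]
  rw [show (-(1:ℝ)/2) = (-2)/4 by norm_num, div_pow]
  have h4ne : ((4:ℝ)^n) ≠ 0 := by positivity
  field_simp
end

section
/- Let k be a positive integer, f_0(z) = 1 + z + ... + z^{4k-1}, and g_0(z) = (1-z)(1-z^2)(1-z^{4k})/(1-z^4). Then ‖f_0 · g_0~‖_2^2 = 12k, where g_0~(z) = g_0(-z). -/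
open Polynomial Finset

noncomputable def fSeed (k : ℕ) : Polynomial ℂ :=
  ∑ j ∈ Finset.range (4 * k), Polynomial.X ^ j

noncomputable def gSeed (k : ℕ) : Polynomial ℂ :=
  ∑ j ∈ Finset.range (4 * k),
    Polynomial.C (if j % 4 = 0 ∨ j % 4 = 3 then (1 : ℂ) else -1) * Polynomial.X ^ j

noncomputable def aCoe : ℕ → ℂ := fun j =>
  if j % 4 = 0 then 1 else if j % 4 = 1 then 2 else if j % 4 = 2 then 1 else 0

noncomputable def bCoe : ℕ → ℂ := fun j =>
  if j % 4 = 0 ∨ j % 4 = 1 then 1 else -1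

noncomputable def Apoly (k : ℕ) : ℂ[X] := ∑ j ∈ range (4 * k), Polynomial.C (aCoe j) * X ^ j

-- g(-X) = ∑ bCoe j X^j
lemma gcomp (k : ℕ) : (gSeed k).comp (-X) = ∑ j ∈ range (4 * k), Polynomial.C (bCoe j) * X ^ j := by
  rw [gSeed]
  have hc : ((∑ j ∈ range (4*k), Polynomial.C (if j % 4 = 0 ∨ j % 4 = 3 then (1:ℂ) else -1) * X ^ j).comp (-X))
      = ∑ j ∈ range (4*k), Polynomial.C (if j % 4 = 0 ∨ j % 4 = 3 then (1:ℂ) else -1) * (-X) ^ j := by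
    simp [Polynomial.comp, eval₂_finset_sum]
  rw [hc]
  refine Finset.sum_congr rfl fun j _ => ?_
  rw [neg_pow, show ((-1 : ℂ[X]) ^ j) = Polynomial.C ((-1:ℂ)^j) by simp, ← mul_assoc, ← Polynomial.C_mul]
  congr 1
  have h2 : j % 2 = j % 4 % 2 := (Nat.mod_mod_of_dvd j (by norm_num)).symm
  have h4 : j % 4 < 4 := Nat.mod_lt _ (by norm_num)
  have hpow : ((-1:ℂ)^j) = if j % 2 = 0 then 1 else -1 := by
    rcases Nat.even_or_odd j with he | ho
    · simp [he.neg_one_pow, Nat.even_iff.mp he]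
    · simp [ho.neg_one_pow, Nat.odd_iff.mp ho]
  rw [bCoe, hpow]
  interval_cases h : j % 4 <;> simp [h2, h]

-- geometric decompositions, by induction
lemma gdecomp (k : ℕ) :
    (∑ j ∈ range (4 * k), Polynomial.C (bCoe j) * X ^ j) =
      (1 + X - X^2 - X^3) * ∑ m ∈ range k, (X : ℂ[X]) ^ (4 * m) := by
  induction k with
  | zero => simp
  | succ n ih =>
    rw [show 4 * (n+1) = (4*n) + 1 + 1 + 1 + 1 by ring, sum_range_succ, sum_range_succ,
      sum_range_succ, sum_range_succ, ih, sum_range_succ, mul_add]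
    have h0 : bCoe (4*n) = 1 := by simp [bCoe, Nat.mul_mod_right]
    have h1 : bCoe (4*n+1) = 1 := by simp [bCoe, Nat.add_mul_mod_self_left, Nat.mul_mod_right]
    have h2 : bCoe (4*n+1+1) = -1 := by
      have : (4*n+2) % 4 = 2 := by omega
      simp [bCoe, show 4*n+1+1 = 4*n+2 by ring, this]
    have h3 : bCoe (4*n+1+1+1) = -1 := by
      have : (4*n+3) % 4 = 3 := by omega
      simp [bCoe, show 4*n+1+1+1 = 4*n+3 by ring, this]
    rw [h0, h1, h2, h3]
    simp only [map_one, map_neg, one_mul]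
    ring

lemma adecomp (k : ℕ) :
    Apoly k = (1 + 2*X + X^2) * ∑ m ∈ range k, (X : ℂ[X]) ^ (4 * m) := by
  induction k with
  | zero => simp [Apoly]
  | succ n ih =>
    rw [Apoly, show 4 * (n+1) = (4*n) + 1 + 1 + 1 + 1 by ring, sum_range_succ, sum_range_succ,
      sum_range_succ, sum_range_succ, ← Apoly, ih, sum_range_succ, mul_add]
    have h0 : aCoe (4*n) = 1 := by simp [aCoe, Nat.mul_mod_right]
    have h1 : aCoe (4*n+1) = 2 := by
      have : (4*n+1) % 4 = 1 := by omega
      simp [aCoe, this]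
    have h2 : aCoe (4*n+1+1) = 1 := by
      have : (4*n+2) % 4 = 2 := by omega
      simp [aCoe, show 4*n+1+1 = 4*n+2 by ring, this]
    have h3 : aCoe (4*n+1+1+1) = 0 := by
      have : (4*n+3) % 4 = 3 := by omega
      simp [aCoe, show 4*n+1+1+1 = 4*n+3 by ring, this]
    rw [h0, h1, h2, h3]
    simp only [map_one, map_ofNat, map_zero, one_mul, zero_mul]
    ring

-- main polynomial identity
lemma key (k : ℕ) : fSeed k * (gSeed k).comp (-X) = Apoly k * (1 - X ^ (4 * k)) := by
  have hD : ((X - 1) * (X ^ 4 - 1) : ℂ[X]) ≠ 0 := by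
    have m1 : (X - 1 : ℂ[X]).Monic := by simpa using monic_X_sub_C (1:ℂ)
    have m2 : (X ^ 4 - 1 : ℂ[X]).Monic := by simpa using monic_X_pow_sub_C (1:ℂ) (n := 4) (by norm_num)
    exact (m1.mul m2).ne_zero
  apply mul_right_cancel₀ hD
  have hf : fSeed k * (X - 1) = X ^ (4 * k) - 1 := geom_sum_mul X (4 * k)
  have hgeom : (∑ m ∈ range k, (X:ℂ[X]) ^ (4 * m)) * (X ^ 4 - 1) = X ^ (4 * k) - 1 := by
    have := geom_sum_mul ((X:ℂ[X]) ^ 4) k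
    simpa [← pow_mul, mul_comm 4] using this
  have hg : (gSeed k).comp (-X) * (X ^ 4 - 1) = (1 + X - X^2 - X^3) * (X ^ (4*k) - 1) := by
    rw [gcomp, gdecomp, mul_assoc, hgeom]
  have ha : Apoly k * (X ^ 4 - 1) = (1 + 2*X + X^2) * (X ^ (4*k) - 1) := by
    rw [adecomp, mul_assoc, hgeom]
  calc fSeed k * (gSeed k).comp (-X) * ((X - 1) * (X ^ 4 - 1))
      = (fSeed k * (X - 1)) * ((gSeed k).comp (-X) * (X ^ 4 - 1)) := by ring
    _ = (X ^ (4*k) - 1) * ((1 + X - X^2 - X^3) * (X ^ (4*k) - 1)) := by rw [hf, hg]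
    _ = (Apoly k * (X ^ 4 - 1)) * ((1 - X ^ (4*k)) * (X - 1)) := by rw [ha]; ring
    _ = Apoly k * (1 - X ^ (4*k)) * ((X - 1) * (X ^ 4 - 1)) := by ring

lemma acoeff (k m : ℕ) : (Apoly k).coeff m = if m < 4*k then aCoe m else 0 := by
  rw [Apoly, finset_sum_coeff]
  simp only [coeff_C_mul, coeff_X_pow, mul_ite, mul_one, mul_zero]
  rw [Finset.sum_ite_eq (range (4*k)) m aCoe]
  simp [Finset.mem_range]

lemma natDegA (k : ℕ) (hk : 0 < k) : (Apoly k).natDegree = 4 * k - 2 := by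
  apply le_antisymm
  · rw [natDegree_le_iff_coeff_eq_zero]
    intro N hN
    rw [acoeff]
    rcases lt_or_ge N (4*k) with h | h
    · have hN3 : N % 4 = 3 := by omega
      simp [aCoe, hN3, h]
    · simp [Nat.not_lt.mpr h]
  · apply le_natDegree_of_ne_zero
    rw [acoeff]
    have h2 : (4*k-2) % 4 = 2 := by omega
    simp [aCoe, h2, show 4*k-2 < 4*k by omega]

lemma Ane (k : ℕ) (hk : 0 < k) : Apoly k ≠ 0 := by
  intro h
  have := acoeff k (4*k-2)
  rw [h] at this
  have h2 : (4*k-2) % 4 = 2 := by omega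
  simp [aCoe, h2, show 4*k-2 < 4*k by omega] at this

lemma natDegQ (k : ℕ) (hk : 0 < k) :
    (Apoly k * (1 - X ^ (4*k))).natDegree = 8 * k - 2 := by
  have h1 : ((1 : ℂ[X]) - X ^ (4*k)) = -(X ^ (4*k) - Polynomial.C 1) := by simp
  have hne : ((1 : ℂ[X]) - X ^ (4*k)) ≠ 0 := by
    rw [h1, neg_ne_zero]
    exact X_pow_sub_C_ne_zero (by omega) 1
  rw [natDegree_mul (Ane k hk) hne, natDegA k hk, h1, natDegree_neg, natDegree_X_pow_sub_C]
  omega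

lemma Qcoeff (k m : ℕ) :
    (Apoly k * (1 - X ^ (4*k))).coeff m =
      (if m < 4*k then aCoe m else 0) - (if 4*k ≤ m then (if m - 4*k < 4*k then aCoe (m-4*k) else 0) else 0) := by
  rw [mul_sub, mul_one, coeff_sub, coeff_mul_X_pow', acoeff]
  congr 1
  split <;> simp [acoeff]

lemma norm_a_sq (j : ℕ) : ‖aCoe j‖ ^ 2 =
    (if j % 4 = 0 then 1 else if j % 4 = 1 then 4 else if j % 4 = 2 then 1 else 0 : ℝ) := by
  have h4 : j % 4 < 4 := Nat.mod_lt _ (by norm_num)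
  interval_cases h : j % 4 <;> norm_num [aCoe, h]

lemma sum_a_sq (k : ℕ) : ∑ j ∈ range (4*k), ‖aCoe j‖ ^ 2 = 6 * (k : ℝ) := by
  induction k with
  | zero => simp
  | succ n ih =>
    rw [show 4 * (n+1) = (4*n) + 1 + 1 + 1 + 1 by ring, sum_range_succ, sum_range_succ,
      sum_range_succ, sum_range_succ, ih]
    have h0 : (4*n) % 4 = 0 := by omega
    have h1 : (4*n+1) % 4 = 1 := by omega
    have h2 : (4*n+1+1) % 4 = 2 := by omega
    have h3 : (4*n+1+1+1) % 4 = 3 := by omega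
    rw [norm_a_sq, norm_a_sq, norm_a_sq, norm_a_sq, h0, h1, h2, h3]
    push_cast
    norm_num
    ring

/-- For the all-ones seed f₀ of length 4k and the seed g₀ consisting of k repetitions
of (1,-1,-1,1), the squared L² norm of f₀·g₀(-z) is 12k. -/
theorem norm_sq_prod_seeds_tilde (k : ℕ) (hk : 0 < k) :
    ∑ j ∈ Finset.range ((fSeed k * (gSeed k).comp (-Polynomial.X)).natDegree + 1),
        ‖(fSeed k * (gSeed k).comp (-Polynomial.X)).coeff j‖ ^ 2 = 12 * (k : ℝ) := by
  rw [key k, natDegQ k hk, show 8*k - 2 + 1 = 8*k - 1 by omega]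
  rw [Finset.range_eq_Ico, ← Finset.sum_Ico_consecutive _ (show 0 ≤ 4*k by omega)
    (show 4*k ≤ 8*k-1 by omega)]
  have hfirst : ∑ j ∈ Finset.Ico 0 (4*k), ‖(Apoly k * (1 - X ^ (4*k))).coeff j‖ ^ 2
      = ∑ j ∈ range (4*k), ‖aCoe j‖ ^ 2 := by
    rw [← Finset.range_eq_Ico]
    refine Finset.sum_congr rfl fun j hj => ?_
    rw [Finset.mem_range] at hj
    rw [Qcoeff]
    simp [hj, Nat.not_le.mpr hj]
  have hsecond : ∑ j ∈ Finset.Ico (4*k) (8*k-1), ‖(Apoly k * (1 - X ^ (4*k))).coeff j‖ ^ 2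
      = ∑ i ∈ range (4*k-1), ‖aCoe i‖ ^ 2 := by
    rw [Finset.sum_Ico_eq_sum_range, show 8*k-1 - 4*k = 4*k-1 by omega]
    refine Finset.sum_congr rfl fun i hi => ?_
    rw [Finset.mem_range] at hi
    rw [Qcoeff]
    have h1 : ¬ (4*k + i < 4*k) := by omega
    have h2 : 4*k ≤ 4*k + i := by omega
    have h3 : 4*k + i - 4*k = i := by omega
    have h4 : i < 4*k := by omega
    rw [if_neg h1, if_pos h2, h3, if_pos h4]
    simp [norm_neg]
  have hlast : ∑ i ∈ range (4*k-1), ‖aCoe i‖ ^ 2 = ∑ i ∈ range (4*k), ‖aCoe i‖ ^ 2 := by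
    rw [show 4*k = (4*k-1) + 1 by omega, sum_range_succ]
    have : aCoe (4*k-1) = 0 := by
      have h3 : (4*k-1) % 4 = 3 := by omega
      simp [aCoe, h3]
    rw [show (4*k-1)+1-1 = 4*k-1 by omega, this]
    simp
  rw [hfirst, hsecond, hlast, sum_a_sq]
  ring
end
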